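/- Let n = p_1^{α_1}···p_r^{α_r} with distinct primes p_1 < ··· < p_r and r ≥ 2, and let x ∈ C_n have order p_k^β for some 1 ≤ k ≤ r, 1 ≤ β ≤ α_k. Then |N([x])| = p_k^β − 2φ(p_k^β) + (p_k^{α_k} − p_k^{β−1})·∏_{j≠k} p_j^{α_j}. -/

import Mathlib

/-- The power graph of a group: distinct vertices are adjacent iff
one is a power of the other. -/
def powerGraph (G : Type*) [Group G] : SimpleGraph G where
  Adj x y := x ≠ y ∧ (x ∈ Subgroup.zpowers y ∨ y ∈ Subgroup.zpowers x)
  symm := ⟨fun x y h => ⟨h.1.symm, h.2.symm⟩⟩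
  loopless := ⟨fun x h => h.1 rfl⟩

/-- `v` lies in a connected component containing a cycle. -/
def InCyclicComp {V : Type*} (Γ : SimpleGraph V) (v : V) : Prop :=
  ∃ w, Γ.Reachable v w ∧ ∃ c : Γ.Walk w w, c.IsCycle

/-- `S` is a cyclic vertex cutset: `Γ - S` is disconnected with at least two
components containing cycles. -/
def IsCyclicCutset {V : Type*} (Γ : SimpleGraph V) (S : Set V) : Prop :=
  ∃ u v : ↥(Sᶜ), ¬ (Γ.induce Sᶜ).Reachable u v ∧
    InCyclicComp (Γ.induce Sᶜ) u ∧ InCyclicComp (Γ.induce Sᶜ) v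

/-- A graph is cyclically separable if it has a cyclic vertex cutset. -/
def CyclicallySeparable {V : Type*} (Γ : SimpleGraph V) : Prop :=
  ∃ S : Set V, IsCyclicCutset Γ S

/-- Vertex connectivity: the least number of vertices whose deletion
disconnects the graph or reduces it to at most one vertex. -/
noncomputable def vertexConn {V : Type*} (Γ : SimpleGraph V) : ℕ :=
  sInf {k | ∃ S : Set V, S.ncard = k ∧
    (¬ (Γ.induce Sᶜ).Connected ∨ Sᶜ.Subsingleton)}

/-- Cyclic vertex connectivity: the least cardinality of a cyclic vertex
cutset, `∞` if there is none. -/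
noncomputable def cyclicVertexConn {V : Type*} (Γ : SimpleGraph V) : ℕ∞ :=
  sInf {k : ℕ∞ | ∃ S : Set V, IsCyclicCutset Γ S ∧ k = (S.ncard : ℕ∞)}

/-- `genClass x` is `[x]`, the set of generators of `⟨x⟩`. -/
def genClass {G : Type*} [Group G] (x : G) : Set G :=
  {y | Subgroup.zpowers y = Subgroup.zpowers x}

/-- Neighbourhood of a set of vertices. -/
def setNbhd {V : Type*} (Γ : SimpleGraph V) (A : Set V) : Set V :=
  {v | v ∉ A ∧ ∃ a ∈ A, Γ.Adj v a}

lemma aux_zpowers_set {G : Type*} [Group G] [Fintype G] [IsCyclic G] (b : G) :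
    (Subgroup.zpowers b : Set G) = {g | g ^ orderOf b = 1} := by
  classical
  have hd : 0 < orderOf b := orderOf_pos b
  have hsub : (Subgroup.zpowers b : Set G).toFinset ⊆ {g : G | g ^ orderOf b = 1}.toFinset := by
    intro g hg
    simp only [Set.mem_toFinset, SetLike.mem_coe, Set.mem_setOf_eq] at hg ⊢
    obtain ⟨k, rfl⟩ := hg
    show (b ^ k) ^ orderOf b = 1
    rw [← zpow_natCast, ← zpow_mul, mul_comm, zpow_mul, zpow_natCast, pow_orderOf_eq_one,
      one_zpow]
  have hcard : {g : G | g ^ orderOf b = 1}.toFinset.card ≤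
      (Subgroup.zpowers b : Set G).toFinset.card := by
    have h1 : (Subgroup.zpowers b : Set G).toFinset.card = orderOf b := by
      rw [Set.toFinset_card]; exact Fintype.card_zpowers
    rw [h1, Set.toFinset_setOf]
    exact IsCyclic.card_pow_eq_one_le hd
  have h := Finset.eq_of_subset_of_card_le hsub hcard
  have := congrArg (fun s : Finset G => (s : Set G)) h
  simpa using this

lemma aux_mem_zpowers {G : Type*} [Group G] [Fintype G] [IsCyclic G] (a b : G) :
    a ∈ Subgroup.zpowers b ↔ orderOf a ∣ orderOf b := by
  rw [← SetLike.mem_coe, aux_zpowers_set, Set.mem_setOf_eq, orderOf_dvd_iff_pow_eq_one]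

lemma aux_nat_dvd {p a β M d : ℕ} (hp : p.Prime) (hcop : Nat.Coprime p M)
    (hβ1 : 1 ≤ β) (hd : d ∣ p ^ a * M) :
    p ^ β ∣ d ↔ ¬ d ∣ p ^ (β - 1) * M := by
  constructor
  · intro h1 h2
    have h3 : p ^ (β - 1) * p ∣ p ^ (β - 1) * M := by
      have : p ^ (β - 1) * p = p ^ β := by
        rw [← pow_succ]; congr 1; omega
      rw [this]; exact h1.trans h2
    have h4 : p ∣ M :=
      (Nat.mul_dvd_mul_iff_left (pow_pos hp.pos (β-1))).mp h3
    exact hp.one_lt.ne' (hcop.eq_one_of_dvd h4)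
  · intro h2
    by_contra h1
    apply h2
    obtain ⟨y, z, hy, hz, rfl⟩ := Nat.dvd_mul.mp hd
    obtain ⟨γ, hγ, rfl⟩ := (Nat.dvd_prime_pow hp).mp hy
    have hγβ : γ ≤ β - 1 := by
      by_contra hc
      exact h1 ((pow_dvd_pow p (by omega : β ≤ γ)).trans (Dvd.intro z rfl))
    exact mul_dvd_mul (pow_dvd_pow p hγβ) hz

/-- Neighbourhood of the generator class of an element of prime power order. -/
theorem stmt3 (n r : ℕ) [NeZero n] (hr : 2 ≤ r) (p α : Fin r → ℕ)
    (hp : ∀ i, (p i).Prime) (hmono : StrictMono p) (hα : ∀ i, 1 ≤ α i)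
    (hn : n = ∏ i, p i ^ α i)
    (k : Fin r) (β : ℕ) (hβ1 : 1 ≤ β) (hβ2 : β ≤ α k)
    (x : Multiplicative (ZMod n)) (hx : orderOf x = p k ^ β) :
    (setNbhd (powerGraph (Multiplicative (ZMod n))) (genClass x)).ncard
      = p k ^ β + (p k ^ α k - p k ^ (β - 1)) *
          (∏ j ∈ Finset.univ.erase k, p j ^ α j)
        - 2 * Nat.totient (p k ^ β) := by
  classical
  set m := p k ^ β with hm
  set M := ∏ j ∈ Finset.univ.erase k, p j ^ α j with hM
  set D := p k ^ (β - 1) * M with hD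
  have hnpM : n = p k ^ α k * M := by
    rw [hn, hM, ← Finset.mul_prod_erase _ _ (Finset.mem_univ k)]
  have hpk := hp k
  have hMpos : 0 < M := Finset.prod_pos fun j _ => pow_pos (hp j).pos _
  have hcop : Nat.Coprime (p k) M := by
    apply Nat.Coprime.prod_right
    intro j hj
    exact Nat.Coprime.pow_right _ <| (Nat.coprime_primes hpk (hp j)).mpr
      fun h => (Finset.mem_erase.mp hj).1 (hmono.injective h.symm)
  have hcardG : Fintype.card (Multiplicative (ZMod n)) = n := by
    rw [Fintype.card_multiplicative, ZMod.card]
  have hmdvd : m ∣ n := by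
    rw [hnpM, hm]; exact dvd_mul_of_dvd_left (pow_dvd_pow _ hβ2) M
  have hDdvd : D ∣ n := by
    rw [hnpM, hD]
    exact mul_dvd_mul (pow_dvd_pow _ (by omega : β - 1 ≤ α k)) dvd_rfl
  have hmem : ∀ a b : (Multiplicative (ZMod n)), a ∈ Subgroup.zpowers b ↔ orderOf a ∣ orderOf b :=
    aux_mem_zpowers
  -- generator class is the set of elements of order m
  have hgen : genClass x = {v : (Multiplicative (ZMod n)) | orderOf v = m} := by
    ext v
    simp only [genClass, Set.mem_setOf_eq]
    constructor
    · intro h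
      have h1 : v ∈ Subgroup.zpowers x := by
        rw [← h]; exact Subgroup.mem_zpowers v
      have h2 : x ∈ Subgroup.zpowers v := by
        rw [h]; exact Subgroup.mem_zpowers x
      have := Nat.dvd_antisymm ((hmem v x).1 h1) ((hmem x v).1 h2)
      rw [this, hx]
    · intro h
      apply le_antisymm
      · rw [Subgroup.zpowers_le]
        exact (hmem v x).2 (by rw [h, hx])
      · rw [Subgroup.zpowers_le]
        exact (hmem x v).2 (by rw [h, hx])
  have hxgen : x ∈ genClass x := rfl
  -- description of the neighbourhood
  have hS : setNbhd (powerGraph (Multiplicative (ZMod n))) (genClass x)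
      = ({v : (Multiplicative (ZMod n)) | orderOf v ∣ m} \ genClass x) ∪ ({v : (Multiplicative (ZMod n)) | m ∣ orderOf v} \ genClass x) := by
    ext v
    simp only [setNbhd, powerGraph, Set.mem_setOf_eq, Set.mem_union, Set.mem_diff]
    constructor
    · rintro ⟨hv, a, ha, -, hadj⟩
      have ha' : orderOf a = m := by rwa [hgen] at ha
      rcases hadj with h | h
      · exact Or.inl ⟨by rw [← ha']; exact (hmem v a).1 h, hv⟩
      · exact Or.inr ⟨by rw [← ha']; exact (hmem a v).1 h, hv⟩
    · rintro (⟨hdvd, hv⟩ | ⟨hdvd, hv⟩)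
      · exact ⟨hv, x, hxgen, fun h => hv (h ▸ hxgen), Or.inl ((hmem v x).2 (by rw [hx]; exact hdvd))⟩
      · exact ⟨hv, x, hxgen, fun h => hv (h ▸ hxgen), Or.inr ((hmem x v).2 (by rw [hx]; exact hdvd))⟩
  -- cardinalities
  have hcardA : {v : (Multiplicative (ZMod n)) | orderOf v ∣ m}.ncard = m := by
    have h1 : {v : (Multiplicative (ZMod n)) | orderOf v ∣ m} = (Subgroup.zpowers x : Set (Multiplicative (ZMod n))) := by
      ext v; rw [Set.mem_setOf_eq, SetLike.mem_coe, hmem, hx]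
    rw [h1, ← Nat.card_coe_set_eq]
    simpa [hx] using Nat.card_zpowers x
  have hcardgen : (genClass x).ncard = Nat.totient m := by
    rw [hgen, Set.ncard_eq_toFinset_card', Set.toFinset_setOf]
    have := IsCyclic.card_orderOf_eq_totient (α := (Multiplicative (ZMod n))) (d := m) (by rw [hcardG]; exact hmdvd)
    simpa using this
  have hcardC : {v : (Multiplicative (ZMod n)) | orderOf v ∣ D}.ncard = D := by
    obtain ⟨g, hg⟩ := IsCyclic.exists_ofOrder_eq_natCard (α := (Multiplicative (ZMod n)))
    rw [Nat.card_eq_fintype_card, hcardG] at hg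
    have hy : orderOf (g ^ (n / D)) = D := by
      have := orderOf_pow_orderOf_div (x := g) (n := D)
        (by rw [hg]; exact NeZero.ne n) (by rw [hg]; exact hDdvd)
      rwa [hg] at this
    have h1 : {v : (Multiplicative (ZMod n)) | orderOf v ∣ D} = (Subgroup.zpowers (g ^ (n / D)) : Set (Multiplicative (ZMod n))) := by
      ext v; rw [Set.mem_setOf_eq, SetLike.mem_coe, hmem, hy]
    rw [h1, ← Nat.card_coe_set_eq]
    simpa [hy] using Nat.card_zpowers (g ^ (n / D))
  have hcardB : {v : (Multiplicative (ZMod n)) | m ∣ orderOf v}.ncard = n - D := by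
    have h1 : {v : (Multiplicative (ZMod n)) | m ∣ orderOf v} = {v : (Multiplicative (ZMod n)) | orderOf v ∣ D}ᶜ := by
      ext v
      rw [Set.mem_compl_iff, Set.mem_setOf_eq, Set.mem_setOf_eq, hm, hD, hM]
      exact aux_nat_dvd (a := α k) hpk hcop hβ1 (orderOf_dvd_card.trans ((dvd_of_eq hcardG).trans (dvd_of_eq hnpM)))
    have h2 := Set.ncard_add_ncard_compl {v : (Multiplicative (ZMod n)) | orderOf v ∣ D}
    rw [Nat.card_eq_fintype_card, hcardG, hcardC] at h2
    rw [h1]; omega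
  -- subsets and disjointness
  have hsubA : genClass x ⊆ {v : (Multiplicative (ZMod n)) | orderOf v ∣ m} := by
    rw [hgen]; intro v hv; rw [Set.mem_setOf_eq, hv]
  have hsubB : genClass x ⊆ {v : (Multiplicative (ZMod n)) | m ∣ orderOf v} := by
    rw [hgen]; intro v hv; rw [Set.mem_setOf_eq, hv]
  have hdisj : Disjoint ({v : (Multiplicative (ZMod n)) | orderOf v ∣ m} \ genClass x)
      ({v : (Multiplicative (ZMod n)) | m ∣ orderOf v} \ genClass x) := by
    rw [Set.disjoint_left]
    rintro v ⟨h1, h2⟩ ⟨h3, -⟩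
    exact h2 (by rw [hgen]; exact Nat.dvd_antisymm h1 h3)
  -- final computation
  rw [hS, Set.ncard_union_eq hdisj (Set.toFinite _) (Set.toFinite _),
    Set.ncard_diff hsubA, Set.ncard_diff hsubB, hcardA, hcardB, hcardgen]
  have hpow : p k ^ (β - 1) * p k = p k ^ β := by
    rw [← pow_succ]; congr 1; omega
  have htot : Nat.totient m = p k ^ β - p k ^ (β - 1) := by
    rw [hm, Nat.totient_prime_pow hpk (by omega : 0 < β), Nat.mul_sub, hpow, mul_one]
  have h1 : p k ^ (β - 1) ≤ p k ^ β := Nat.pow_le_pow_right hpk.pos (by omega)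
  have h2 : p k ^ β ≤ p k ^ α k := Nat.pow_le_pow_right hpk.pos hβ2
  have h3 : (p k ^ α k - p k ^ (β - 1)) * M = p k ^ α k * M - p k ^ (β - 1) * M :=
    Nat.sub_mul _ _ _
  have h4 : p k ^ α k - p k ^ (β - 1) ≤ (p k ^ α k - p k ^ (β - 1)) * M :=
    Nat.le_mul_of_pos_right _ hMpos
  rw [htot, hm] at *
  omega
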